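/- Training instability of S6 under growing input magnitude (Theorem 5.1, part 1): Let d = 1 and n ≥ 1, let A ∈ ℝ^{n×n} be diagonal with negative diagonal entries and B ∈ ℝ^{n×1}. Fix L ≥ 1, b ∈ ℝ, and set the S6 selection weight w = 0. Let u = (u_1, …, u_L) be sampled from a probability distribution 𝔻 on ℝ^L, and for c > 0 let c𝔻 denote the law of c·u for u ~ 𝔻. For every C ∈ ℝ^{1×n}, if the three expectations E_{u~𝔻}|∂Γ_S6(u)_L/∂w|, E_{u~𝔻}|∂Γ_S6(u)_L/∂b|, and E_{u~𝔻}|∂Γ_S4D(u)_L/∂b| are all nonzero (where the S4D unit shares the same A, B, C, b), then as c → ∞: E_{u~c𝔻}|∂Γ_S6(u)_L/∂w| / E_{u~c𝔻}|∂Γ_S4D(u)_L/∂b| = Ω(c³) and E_{u~c𝔻}|∂Γ_S6(u)_L/∂b| / E_{u~c𝔻}|∂Γ_S4D(u)_L/∂b| = Ω(c²). -/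

import Mathlib

open Matrix Filter Asymptotics MeasureTheory Real Topology

noncomputable section

/-- Matrix exponential over the reals. -/
def mexp {n : ℕ} (A : Matrix (Fin n) (Fin n) ℝ) : Matrix (Fin n) (Fin n) ℝ :=
  NormedSpace.exp A

/-- The softplus function `z ↦ log (1 + e^z)`. -/
def softplus (z : ℝ) : ℝ := Real.log (1 + Real.exp z)

/-- Time-varying linear state recursion: `x 0 = 0`,
`x (k+1) = Abar k *ᵥ x k + u k • Bbar k`.  (Index `k : ℕ` is the 0-based
position of the input, so `x (k+1)` is the state `x_{k+1}` after seeing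
inputs `u_1 = u 0, …, u_{k+1} = u k`.) -/
def tvState {n : ℕ} (Abar : ℕ → Matrix (Fin n) (Fin n) ℝ) (Bbar : ℕ → Fin n → ℝ)
    (u : ℕ → ℝ) : ℕ → Fin n → ℝ
  | 0 => 0
  | k + 1 => (Abar k) *ᵥ (tvState Abar Bbar u k) + u k • Bbar k

/-- Zero-padded extension of a finite scalar sequence `(u_1, …, u_L)`
(`u 0` is `u_1`, …, `u ⟨L-1⟩` is `u_L`). -/
def seq {L : ℕ} (u : Fin L → ℝ) : ℕ → ℝ := fun k => if h : k < L then u ⟨k, h⟩ else 0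

/-- Zero-padded extension of a finite vector-valued sequence. -/
def seqd {L d : ℕ} (u : Fin L → Fin d → ℝ) : ℕ → Fin d → ℝ :=
  fun k => if h : k < L then u ⟨k, h⟩ else 0

/-- Final output `Γ_S4D(u)_L` of a single-channel (`d = 1`) S4D unit:
`Ā = exp(exp(b) A)`, `B̄ = A⁻¹(Ā − I)B`, `x_k = Ā x_{k-1} + B̄ u_k`, `x_0 = 0`,
`y_k = C x_k`. -/
def s4dScalar {n : ℕ} (A : Matrix (Fin n) (Fin n) ℝ) (B C : Fin n → ℝ) (b : ℝ)
    (L : ℕ) (u : ℕ → ℝ) : ℝ :=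
  C ⬝ᵥ tvState (fun _ => mexp (Real.exp b • A))
      (fun _ => A⁻¹ *ᵥ ((mexp (Real.exp b • A) - 1) *ᵥ B)) u L

/-- Final output `Γ_S6(u)_L` of a single-channel (`d = 1`) S6 unit:
`Δ_k = softplus(w u_k + b)`, `Ā_k = exp(Δ_k A)`, `B̄_k = A⁻¹(Ā_k − I)B u_k`,
`x_k = Ā_k x_{k-1} + B̄_k u_k`, `x_0 = 0`, `y_k = (u_k C) x_k`. -/
def s6Scalar {n : ℕ} (A : Matrix (Fin n) (Fin n) ℝ) (B C : Fin n → ℝ) (w b : ℝ)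
    (L : ℕ) (u : ℕ → ℝ) : ℝ :=
  u (L - 1) *
    (C ⬝ᵥ tvState (fun k => mexp (softplus (w * u k + b) • A))
        (fun k => u k • (A⁻¹ *ᵥ ((mexp (softplus (w * u k + b) • A) - 1) *ᵥ B))) u L)

lemma tvState_smul_input {n : ℕ} (Ab : ℕ → Matrix (Fin n) (Fin n) ℝ)
    (Bb : ℕ → Fin n → ℝ) (u : ℕ → ℝ) (c : ℝ) :
    ∀ k, tvState Ab Bb (fun j => c * u j) k = c • tvState Ab Bb u k
  | 0 => by simp [tvState]
  | k + 1 => by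
    rw [tvState, tvState, tvState_smul_input Ab Bb u c k, Matrix.mulVec_smul, smul_add,
      mul_smul]

lemma tvState_smul_B {n : ℕ} (Ab : ℕ → Matrix (Fin n) (Fin n) ℝ)
    (Bb : ℕ → Fin n → ℝ) (u : ℕ → ℝ) (c : ℝ) :
    ∀ k, tvState Ab (fun j => c • Bb j) u k = c • tvState Ab Bb u k
  | 0 => by simp [tvState]
  | k + 1 => by
    rw [tvState, tvState, tvState_smul_B Ab Bb u c k, Matrix.mulVec_smul, smul_add,
      smul_comm (u k) c]

lemma seq_smul {L : ℕ} (c : ℝ) (u : Fin L → ℝ) :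
    _root_.seq (c • u) = fun k => c * _root_.seq u k := by
  funext k; unfold _root_.seq; split <;> simp

lemma deriv_comp_mul (c : ℝ) (hc : c ≠ 0) (f : ℝ → ℝ) (x : ℝ) :
    deriv (fun y => f (c * y)) x = c * deriv f (c * x) := by
  by_cases hf : DifferentiableAt ℝ f (c * x)
  · have h1 : HasDerivAt (fun y : ℝ => c * y) c x := by
      simpa using (hasDerivAt_id x).const_mul c
    have h2 := hf.hasDerivAt.comp x h1
    simp only [Function.comp_def] at h2
    rw [h2.deriv, mul_comm]
  · have hf2 : ¬ DifferentiableAt ℝ (fun y => f (c * y)) x := by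
      intro h
      apply hf
      have h3 : DifferentiableAt ℝ (fun z : ℝ => c⁻¹ * z) (c * x) :=
        (differentiableAt_id.const_mul _)
      have hx : c⁻¹ * (c * x) = x := by field_simp
      have h4 : DifferentiableAt ℝ ((fun y => f (c * y)) ∘ fun z : ℝ => c⁻¹ * z) (c * x) :=
        DifferentiableAt.comp (c * x) (hx.symm ▸ h) h3
      have : ((fun y => f (c * y)) ∘ fun z : ℝ => c⁻¹ * z) = f := by
        funext z; simp [Function.comp, mul_inv_cancel_left₀ hc]
      rwa [this] at h4
    rw [deriv_zero_of_not_differentiableAt hf, deriv_zero_of_not_differentiableAt hf2, mul_zero]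

lemma s4d_hom {n L : ℕ} (A : Matrix (Fin n) (Fin n) ℝ) (B C : Fin n → ℝ) (b c : ℝ)
    (u : Fin L → ℝ) :
    s4dScalar A B C b L (_root_.seq (c • u)) = c * s4dScalar A B C b L (_root_.seq u) := by
  unfold s4dScalar
  rw [seq_smul, tvState_smul_input, dotProduct_smul, smul_eq_mul]

lemma s6_hom {n L : ℕ} (A : Matrix (Fin n) (Fin n) ℝ) (B C : Fin n → ℝ) (w b c : ℝ)
    (u : Fin L → ℝ) :
    s6Scalar A B C w b L (_root_.seq (c • u)) =
      c ^ 3 * s6Scalar A B C (c * w) b L (_root_.seq u) := by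
  unfold s6Scalar
  simp only [seq_smul]
  have hsp : ∀ k : ℕ, w * (c * _root_.seq u k) + b = (c * w) * _root_.seq u k + b := by
    intro k; ring
  simp only [hsp]
  have hB : (fun k => (c * _root_.seq u k) •
        (A⁻¹ *ᵥ ((mexp (softplus ((c * w) * _root_.seq u k + b) • A) - 1) *ᵥ B)))
      = fun k => c • (_root_.seq u k •
        (A⁻¹ *ᵥ ((mexp (softplus ((c * w) * _root_.seq u k + b) • A) - 1) *ᵥ B))) := by
    funext k; rw [mul_smul]
  rw [hB, tvState_smul_B, tvState_smul_input, dotProduct_smul, dotProduct_smul,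
    smul_eq_mul, smul_eq_mul]
  ring

def smulEquiv (L : ℕ) (c : ℝ) (hc : c ≠ 0) : (Fin L → ℝ) ≃ᵐ (Fin L → ℝ) where
  toFun := fun v => c • v
  invFun := fun v => c⁻¹ • v
  left_inv := fun v => inv_smul_smul₀ hc v
  right_inv := fun v => smul_inv_smul₀ hc v
  measurable_toFun := measurable_id.const_smul c
  measurable_invFun := measurable_id.const_smul c⁻¹

lemma integral_map_smul {L : ℕ} (c : ℝ) (hc : c ≠ 0) (μ : Measure (Fin L → ℝ))
    (g : (Fin L → ℝ) → ℝ) :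
    ∫ u, g u ∂(Measure.map (fun v : Fin L → ℝ => c • v) μ) = ∫ u, g (c • u) ∂μ :=
  (smulEquiv L c hc).measurableEmbedding.integral_map g

lemma deriv_w_hom {n L : ℕ} (A : Matrix (Fin n) (Fin n) ℝ) (B C : Fin n → ℝ) (b c : ℝ)
    (hc : c ≠ 0) (v : Fin L → ℝ) :
    deriv (fun w => s6Scalar A B C w b L (_root_.seq (c • v))) 0
      = c ^ 4 * deriv (fun w => s6Scalar A B C w b L (_root_.seq v)) 0 := by
  have h1 : (fun w => s6Scalar A B C w b L (_root_.seq (c • v)))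
      = fun w => c ^ 3 * s6Scalar A B C (c * w) b L (_root_.seq v) :=
    funext fun w => s6_hom A B C w b c v
  rw [h1, deriv_const_mul_field,
    deriv_comp_mul c hc (fun w => s6Scalar A B C w b L (_root_.seq v)) 0, mul_zero]
  ring

lemma deriv_b6_hom {n L : ℕ} (A : Matrix (Fin n) (Fin n) ℝ) (B C : Fin n → ℝ) (b c : ℝ)
    (v : Fin L → ℝ) :
    deriv (fun b' => s6Scalar A B C 0 b' L (_root_.seq (c • v))) b
      = c ^ 3 * deriv (fun b' => s6Scalar A B C 0 b' L (_root_.seq v)) b := by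
  have h1 : (fun b' => s6Scalar A B C 0 b' L (_root_.seq (c • v)))
      = fun b' => c ^ 3 * s6Scalar A B C 0 b' L (_root_.seq v) := by
    funext b'; rw [s6_hom A B C 0 b' c v, mul_zero]
  rw [h1, deriv_const_mul_field]

lemma deriv_b4_hom {n L : ℕ} (A : Matrix (Fin n) (Fin n) ℝ) (B C : Fin n → ℝ) (b c : ℝ)
    (v : Fin L → ℝ) :
    deriv (fun b' => s4dScalar A B C b' L (_root_.seq (c • v))) b
      = c * deriv (fun b' => s4dScalar A B C b' L (_root_.seq v)) b := by
  have h1 : (fun b' => s4dScalar A B C b' L (_root_.seq (c • v)))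
      = fun b' => c * s4dScalar A B C b' L (_root_.seq v) :=
    funext fun b' => s4d_hom A B C b' c v
  rw [h1, deriv_const_mul_field]


/-- **Training instability of S6 under growing input magnitude**
(Theorem 5.1, part 1).  Let `d = 1`, `A` diagonal with negative diagonal
entries, `B ∈ ℝ^{n×1}`, fix `L ≥ 1`, `b ∈ ℝ` and `w = 0`.  For every `C`, if
the expectations `E_{u∼𝔻}|∂Γ_S6/∂w|`, `E_{u∼𝔻}|∂Γ_S6/∂b|` and
`E_{u∼𝔻}|∂Γ_S4D/∂b|` are all nonzero, then as `c → ∞`,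
`E_{u∼c𝔻}|∂Γ_S6/∂w| / E_{u∼c𝔻}|∂Γ_S4D/∂b| = Ω(c³)` and
`E_{u∼c𝔻}|∂Γ_S6/∂b| / E_{u∼c𝔻}|∂Γ_S4D/∂b| = Ω(c²)`. -/
theorem s6_instability_in_magnitude
    (n L : ℕ) (hn : 1 ≤ n) (hL : 1 ≤ L)
    (A : Matrix (Fin n) (Fin n) ℝ)
    (hAdiag : ∀ i j : Fin n, i ≠ j → A i j = 0) (hAneg : ∀ i : Fin n, A i i < 0)
    (B : Fin n → ℝ) (b : ℝ)
    (𝔻 : Measure (Fin L → ℝ)) [IsProbabilityMeasure 𝔻]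
    (C : Fin n → ℝ)
    (hw6 : ∫ u, |deriv (fun w => s6Scalar A B C w b L (seq u)) 0| ∂𝔻 ≠ 0)
    (hb6 : ∫ u, |deriv (fun b' => s6Scalar A B C 0 b' L (seq u)) b| ∂𝔻 ≠ 0)
    (hb4 : ∫ u, |deriv (fun b' => s4dScalar A B C b' L (seq u)) b| ∂𝔻 ≠ 0) :
    ((fun c : ℝ => c ^ 3) =O[atTop] fun c : ℝ =>
        (∫ u, |deriv (fun w => s6Scalar A B C w b L (seq u)) 0|
            ∂(Measure.map (fun v : Fin L → ℝ => c • v) 𝔻)) /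
          (∫ u, |deriv (fun b' => s4dScalar A B C b' L (seq u)) b|
            ∂(Measure.map (fun v : Fin L → ℝ => c • v) 𝔻))) ∧
    ((fun c : ℝ => c ^ 2) =O[atTop] fun c : ℝ =>
        (∫ u, |deriv (fun b' => s6Scalar A B C 0 b' L (seq u)) b|
            ∂(Measure.map (fun v : Fin L → ℝ => c • v) 𝔻)) /
          (∫ u, |deriv (fun b' => s4dScalar A B C b' L (seq u)) b|
            ∂(Measure.map (fun v : Fin L → ℝ => c • v) 𝔻))) := by
  set Iw := ∫ u, |deriv (fun w => s6Scalar A B C w b L (seq u)) 0| ∂𝔻 with hIw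
  set I6 := ∫ u, |deriv (fun b' => s6Scalar A B C 0 b' L (seq u)) b| ∂𝔻 with hI6
  set I4 := ∫ u, |deriv (fun b' => s4dScalar A B C b' L (seq u)) b| ∂𝔻 with hI4
  have keyw : ∀ c : ℝ, 0 < c →
      (∫ u, |deriv (fun w => s6Scalar A B C w b L (seq u)) 0|
          ∂(Measure.map (fun v : Fin L → ℝ => c • v) 𝔻)) = c ^ 4 * Iw := by
    intro c hc
    rw [integral_map_smul c hc.ne' 𝔻]
    have h : ∀ v : Fin L → ℝ,
        |deriv (fun w => s6Scalar A B C w b L (seq (c • v))) 0|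
          = c ^ 4 * |deriv (fun w => s6Scalar A B C w b L (seq v)) 0| := by
      intro v
      rw [deriv_w_hom A B C b c hc.ne' v, abs_mul,
        abs_of_pos (by positivity : (0:ℝ) < c ^ 4)]
    simp only [h]
    rw [hIw, MeasureTheory.integral_const_mul]
  have key6 : ∀ c : ℝ, 0 < c →
      (∫ u, |deriv (fun b' => s6Scalar A B C 0 b' L (seq u)) b|
          ∂(Measure.map (fun v : Fin L → ℝ => c • v) 𝔻)) = c ^ 3 * I6 := by
    intro c hc
    rw [integral_map_smul c hc.ne' 𝔻]
    have h : ∀ v : Fin L → ℝ,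
        |deriv (fun b' => s6Scalar A B C 0 b' L (seq (c • v))) b|
          = c ^ 3 * |deriv (fun b' => s6Scalar A B C 0 b' L (seq v)) b| := by
      intro v
      rw [deriv_b6_hom A B C b c v, abs_mul, abs_of_pos (by positivity : (0:ℝ) < c ^ 3)]
    simp only [h]
    rw [hI6, MeasureTheory.integral_const_mul]
  have key4 : ∀ c : ℝ, 0 < c →
      (∫ u, |deriv (fun b' => s4dScalar A B C b' L (seq u)) b|
          ∂(Measure.map (fun v : Fin L → ℝ => c • v) 𝔻)) = c * I4 := by
    intro c hc
    rw [integral_map_smul c hc.ne' 𝔻]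
    have h : ∀ v : Fin L → ℝ,
        |deriv (fun b' => s4dScalar A B C b' L (seq (c • v))) b|
          = c * |deriv (fun b' => s4dScalar A B C b' L (seq v)) b| := by
      intro v
      rw [deriv_b4_hom A B C b c v, abs_mul, abs_of_pos hc]
    simp only [h]
    rw [hI4, MeasureTheory.integral_const_mul]
  constructor
  · rw [isBigO_iff]
    refine ⟨|Iw / I4|⁻¹, ?_⟩
    filter_upwards [eventually_ge_atTop 1] with c hc1
    have hc0 : (0:ℝ) < c := lt_of_lt_of_le one_pos hc1
    rw [keyw c hc0, key4 c hc0]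
    have hr : c ^ 4 * Iw / (c * I4) = c ^ 3 * (Iw / I4) := by
      field_simp
    rw [hr, Real.norm_eq_abs, Real.norm_eq_abs, abs_mul]
    have hK : |Iw / I4| ≠ 0 := abs_ne_zero.mpr (div_ne_zero hw6 hb4)
    have heq : |Iw / I4|⁻¹ * (|c ^ 3| * |Iw / I4|) = |c ^ 3| := by
      rw [mul_comm (|c ^ 3|) (|Iw / I4|), ← mul_assoc, inv_mul_cancel₀ hK, one_mul]
    exact le_of_eq heq.symm
  · rw [isBigO_iff]
    refine ⟨|I6 / I4|⁻¹, ?_⟩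
    filter_upwards [eventually_ge_atTop 1] with c hc1
    have hc0 : (0:ℝ) < c := lt_of_lt_of_le one_pos hc1
    rw [key6 c hc0, key4 c hc0]
    have hr : c ^ 3 * I6 / (c * I4) = c ^ 2 * (I6 / I4) := by
      field_simp
    rw [hr, Real.norm_eq_abs, Real.norm_eq_abs, abs_mul]
    have hK : |I6 / I4| ≠ 0 := abs_ne_zero.mpr (div_ne_zero hb6 hb4)
    have heq : |I6 / I4|⁻¹ * (|c ^ 2| * |I6 / I4|) = |c ^ 2| := by
      rw [mul_comm (|c ^ 2|) (|I6 / I4|), ← mul_assoc, inv_mul_cancel₀ hK, one_mul]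
    exact le_of_eq heq.symm
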